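/- Let μ ∈ ℝ, σ > 0 and ρ > 0, and let r(x) = 2 φ_{μ,σ²}(x) Φ((μ - x)/√(σ² + ρ²)). Then r is a probability density on ℝ whose mean is μ - 2σ²/√(2π(2σ² + ρ²)) and whose variance is σ² [1 - 2σ²/(π(2σ² + ρ²))]. -/

import Mathlib

open MeasureTheory Real

/-- The density of the standard normal distribution. -/
noncomputable def stdGaussianPDF (x : ℝ) : ℝ :=
  (Real.sqrt (2 * Real.pi))⁻¹ * Real.exp (-x ^ 2 / 2)

/-- The cumulative distribution function of the standard normal distribution. -/
noncomputable def stdGaussianCDF (x : ℝ) : ℝ :=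
  ∫ t in Set.Iic x, stdGaussianPDF t

/-- The density of the normal distribution with mean `μ` and variance `σ²`. -/
noncomputable def normalPDF (μ σ : ℝ) (x : ℝ) : ℝ :=
  (σ * Real.sqrt (2 * Real.pi))⁻¹ * Real.exp (-(x - μ) ^ 2 / (2 * σ ^ 2))

open Set Filter Topology


lemma sg_def (x : ℝ) : stdGaussianPDF x
    = (Real.sqrt (2 * Real.pi))⁻¹ * Real.exp (-(2⁻¹) * x ^ 2) := by
  unfold stdGaussianPDF; ring_nf

lemma sg_nonneg (x : ℝ) : 0 ≤ stdGaussianPDF x :=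
  mul_nonneg (inv_nonneg.2 (Real.sqrt_nonneg _)) (Real.exp_pos _).le

lemma sg_le (x : ℝ) : stdGaussianPDF x ≤ (Real.sqrt (2 * Real.pi))⁻¹ := by
  have h : Real.exp (-x ^ 2 / 2) ≤ 1 := by
    rw [Real.exp_le_one_iff]; nlinarith [sq_nonneg x]
  calc stdGaussianPDF x ≤ (Real.sqrt (2 * Real.pi))⁻¹ * 1 :=
        mul_le_mul_of_nonneg_left h (inv_nonneg.2 (Real.sqrt_nonneg _))
    _ = _ := mul_one _

lemma sg_neg (x : ℝ) : stdGaussianPDF (-x) = stdGaussianPDF x := by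
  unfold stdGaussianPDF; rw [neg_sq]

lemma sg_cont : Continuous stdGaussianPDF := by
  unfold stdGaussianPDF; fun_prop

lemma sg_integrable : Integrable stdGaussianPDF := by
  have h := (integrable_exp_neg_mul_sq (by norm_num : (0:ℝ) < 2⁻¹)).const_mul
    ((Real.sqrt (2 * Real.pi))⁻¹)
  exact h.congr (Eventually.of_forall fun x => (sg_def x).symm)

lemma sg_integral : ∫ x, stdGaussianPDF x = 1 := by
  have h : ∫ x : ℝ, Real.exp (-(2⁻¹) * x ^ 2) = Real.sqrt (Real.pi / 2⁻¹) :=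
    integral_gaussian 2⁻¹
  have h2 : Real.pi / 2⁻¹ = 2 * Real.pi := by ring
  have h3 : Real.sqrt (2 * Real.pi) ≠ 0 := by positivity
  calc ∫ x, stdGaussianPDF x
      = ∫ x : ℝ, (Real.sqrt (2 * Real.pi))⁻¹ * Real.exp (-(2⁻¹) * x ^ 2) := by
        simp_rw [sg_def]
    _ = (Real.sqrt (2 * Real.pi))⁻¹ * ∫ x : ℝ, Real.exp (-(2⁻¹) * x ^ 2) :=
        integral_const_mul _ _
    _ = 1 := by rw [h, h2, inv_mul_cancel₀ h3]

lemma integrable_id_mul_sg : Integrable (fun x : ℝ => x * stdGaussianPDF x) := by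
  have h := (integrable_mul_exp_neg_mul_sq (by norm_num : (0:ℝ) < 2⁻¹)).const_mul
    ((Real.sqrt (2 * Real.pi))⁻¹)
  refine h.congr (Eventually.of_forall fun x => ?_)
  show _ = x * stdGaussianPDF x
  rw [sg_def]; ring

lemma integrable_abs_mul_sg : Integrable (fun x : ℝ => |x| * stdGaussianPDF x) := by
  refine integrable_id_mul_sg.abs.congr (Eventually.of_forall fun x => ?_)
  show |x * stdGaussianPDF x| = _
  rw [abs_mul, abs_of_nonneg (sg_nonneg x)]

lemma integrable_sq_mul_sg : Integrable (fun x : ℝ => x ^ 2 * stdGaussianPDF x) := by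
  have h := (integrable_rpow_mul_exp_neg_mul_sq (by norm_num : (0:ℝ) < 2⁻¹)
    (by norm_num : (-1:ℝ) < 2)).const_mul ((Real.sqrt (2 * Real.pi))⁻¹)
  refine h.congr (Eventually.of_forall fun x => ?_)
  have hx : x ^ (2:ℝ) = x ^ (2:ℕ) := by
    rw [← Real.rpow_natCast x 2]; norm_num
  simp only [hx]
  rw [sg_def]; ring

lemma Phi_nonneg (x : ℝ) : 0 ≤ stdGaussianCDF x :=
  setIntegral_nonneg measurableSet_Iic fun t _ => sg_nonneg t

lemma Phi_le_one (x : ℝ) : stdGaussianCDF x ≤ 1 := by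
  rw [← sg_integral]
  exact setIntegral_le_integral sg_integrable (Eventually.of_forall fun t => sg_nonneg t)

lemma Phi_neg (x : ℝ) : stdGaussianCDF (-x) = 1 - stdGaussianCDF x := by
  have h1 : stdGaussianCDF (-x) = ∫ t in Ioi x, stdGaussianPDF t := by
    unfold stdGaussianCDF
    rw [← integral_comp_neg_Ioi]
    simp only [sg_neg]
  have h2 : stdGaussianCDF x + ∫ t in Ioi x, stdGaussianPDF t = 1 := by
    rw [← sg_integral]
    exact intervalIntegral.integral_Iic_add_Ioi sg_integrable.integrableOn sg_integrable.integrableOn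
  linarith

lemma hasDerivAt_Phi (x : ℝ) : HasDerivAt stdGaussianCDF (stdGaussianPDF x) x := by
  have key : stdGaussianCDF = fun y => stdGaussianCDF 0 + ∫ t in (0:ℝ)..y, stdGaussianPDF t := by
    funext y
    rw [← intervalIntegral.integral_Iic_sub_Iic sg_integrable.integrableOn sg_integrable.integrableOn]
    unfold stdGaussianCDF; ring
  have hd : HasDerivAt (fun y => ∫ t in (0:ℝ)..y, stdGaussianPDF t) (stdGaussianPDF x) x :=
    intervalIntegral.integral_hasDerivAt_right sg_integrable.intervalIntegrable
      (sg_cont.stronglyMeasurableAtFilter _ _) sg_cont.continuousAt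
  rw [key]
  exact hd.const_add _

lemma Phi_cont : Continuous stdGaussianCDF :=
  continuous_iff_continuousAt.2 fun x => (hasDerivAt_Phi x).continuousAt

lemma hasDerivAt_sg (x : ℝ) : HasDerivAt stdGaussianPDF (-x * stdGaussianPDF x) x := by
  have h : HasDerivAt (fun y : ℝ => -y ^ 2 / 2) (-x) x := by
    have h0 := ((hasDerivAt_pow 2 x).neg).div_const 2
    refine h0.congr_deriv ?_
    simp; ring
  have h2 := (h.exp).const_mul ((Real.sqrt (2 * Real.pi))⁻¹)
  refine h2.congr_deriv ?_
  simp only [stdGaussianPDF]; ring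

lemma tendsto_sg_atTop : Tendsto stdGaussianPDF atTop (𝓝 0) := by
  have h1 : Tendsto (fun x : ℝ => -x ^ 2 / 2) atTop atBot := by
    apply Tendsto.atBot_div_const (by norm_num : (0:ℝ) < 2)
    exact tendsto_neg_atBot_iff.mpr (tendsto_pow_atTop (by norm_num))
  have h2 : Tendsto (fun x : ℝ => Real.exp (-x ^ 2 / 2)) atTop (𝓝 0) :=
    Real.tendsto_exp_atBot.comp h1
  have h3 := h2.const_mul ((Real.sqrt (2 * Real.pi))⁻¹)
  rw [mul_zero] at h3
  exact h3

lemma tendsto_sg_atBot : Tendsto stdGaussianPDF atBot (𝓝 0) := by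
  have h := tendsto_sg_atTop.comp tendsto_neg_atBot_atTop
  refine h.congr fun x => ?_
  exact sg_neg x

lemma tendsto_id_mul_sg_atTop : Tendsto (fun x => x * stdGaussianPDF x) atTop (𝓝 0) := by
  have h := rpow_mul_exp_neg_mul_sq_isLittleO_exp_neg (by norm_num : (0:ℝ) < 2⁻¹) 1
  simp only [Real.rpow_one] at h
  have hlin : Tendsto (fun x : ℝ => -(1/2) * x) atTop atBot :=
    (tendsto_const_mul_atBot_of_neg (by norm_num)).mpr tendsto_id
  have h2 : Tendsto (fun x : ℝ => Real.exp (-(1/2) * x)) atTop (𝓝 0) :=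
    Real.tendsto_exp_atBot.comp hlin
  have h3 : Tendsto (fun x : ℝ => x * Real.exp (-(2⁻¹) * x ^ 2)) atTop (𝓝 0) :=
    h.isBigO.trans_tendsto h2
  have h4 := h3.const_mul ((Real.sqrt (2 * Real.pi))⁻¹)
  rw [mul_zero] at h4
  refine h4.congr fun x => ?_
  rw [sg_def]; ring

lemma tendsto_id_mul_sg_atBot : Tendsto (fun x => x * stdGaussianPDF x) atBot (𝓝 0) := by
  have h := (tendsto_id_mul_sg_atTop.comp tendsto_neg_atBot_atTop).neg
  rw [neg_zero] at h
  refine h.congr fun x => ?_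
  show -((-x) * stdGaussianPDF (-x)) = _
  rw [sg_neg]; ring

lemma integral_deriv_eq_zero {g g' : ℝ → ℝ} (hd : ∀ x, HasDerivAt g (g' x) x)
    (hint : Integrable g') (hbot : Tendsto g atBot (𝓝 0)) (htop : Tendsto g atTop (𝓝 0)) :
    ∫ x, g' x = 0 := by
  have h1 : ∫ x in Iic (0:ℝ), g' x = g 0 - 0 :=
    integral_Iic_of_hasDerivAt_of_tendsto' (fun x _ => hd x) hint.integrableOn hbot
  have h2 : ∫ x in Ioi (0:ℝ), g' x = 0 - g 0 :=
    integral_Ioi_of_hasDerivAt_of_tendsto' (fun x _ => hd x) hint.integrableOn htop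
  rw [← intervalIntegral.integral_Iic_add_Ioi hint.integrableOn hint.integrableOn, h1, h2]
  ring
lemma integral_id_mul_sg : ∫ x, x * stdGaussianPDF x = 0 := by
  apply integral_deriv_eq_zero (g := fun x => -stdGaussianPDF x)
  · intro x
    have h := (hasDerivAt_sg x).neg
    rw [show -(-x * stdGaussianPDF x) = x * stdGaussianPDF x by ring] at h
    exact h
  · exact integrable_id_mul_sg
  · have := tendsto_sg_atBot.neg; rwa [neg_zero] at this
  · have := tendsto_sg_atTop.neg; rwa [neg_zero] at this

lemma integral_sq_mul_sg : ∫ x, x ^ 2 * stdGaussianPDF x = 1 := by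
  have hz : ∫ x, (x ^ 2 * stdGaussianPDF x - stdGaussianPDF x) = 0 := by
    apply integral_deriv_eq_zero (g := fun x => -(x * stdGaussianPDF x))
    · intro x
      have h := ((hasDerivAt_id x).mul (hasDerivAt_sg x)).neg
      rw [show -(1 * stdGaussianPDF x + id x * (-x * stdGaussianPDF x))
          = x ^ 2 * stdGaussianPDF x - stdGaussianPDF x by simp [id]; ring] at h
      exact h
    · exact integrable_sq_mul_sg.sub sg_integrable
    · have := tendsto_id_mul_sg_atBot.neg; rwa [neg_zero] at this
    · have := tendsto_id_mul_sg_atTop.neg; rwa [neg_zero] at this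
  rw [integral_sub integrable_sq_mul_sg sg_integrable, sg_integral] at hz
  linarith

lemma integral_sg_mul_sg (b : ℝ) :
    ∫ x, stdGaussianPDF x * stdGaussianPDF (b * x)
      = (Real.sqrt (2 * Real.pi * (1 + b ^ 2)))⁻¹ := by
  have hb : (0:ℝ) < (1 + b ^ 2) / 2 := by positivity
  have key : ∀ x : ℝ, stdGaussianPDF x * stdGaussianPDF (b * x)
      = (Real.sqrt (2 * Real.pi))⁻¹ * (Real.sqrt (2 * Real.pi))⁻¹
        * Real.exp (-((1 + b ^ 2) / 2) * x ^ 2) := by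
    intro x
    simp only [stdGaussianPDF]
    rw [mul_mul_mul_comm, ← Real.exp_add,
      show -x ^ 2 / 2 + -(b * x) ^ 2 / 2 = -((1 + b ^ 2) / 2) * x ^ 2 by ring]
  have h2 : ∫ x : ℝ, Real.exp (-((1 + b ^ 2) / 2) * x ^ 2)
      = Real.sqrt (Real.pi / ((1 + b ^ 2) / 2)) := integral_gaussian _
  have hbne : (1:ℝ) + b ^ 2 ≠ 0 := by positivity
  have harg : Real.pi / ((1 + b ^ 2) / 2) = 2 * Real.pi / (1 + b ^ 2) := by
    field_simp
  have hA : (0:ℝ) ≤ 2 * Real.pi := by positivity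
  have hsA : Real.sqrt (2 * Real.pi) ≠ 0 := by positivity
  have hsB : Real.sqrt (1 + b ^ 2) ≠ 0 := by positivity
  calc ∫ x, stdGaussianPDF x * stdGaussianPDF (b * x)
      = (Real.sqrt (2 * Real.pi))⁻¹ * (Real.sqrt (2 * Real.pi))⁻¹
        * ∫ x : ℝ, Real.exp (-((1 + b ^ 2) / 2) * x ^ 2) := by
        simp_rw [key]; exact integral_const_mul _ _
    _ = (Real.sqrt (2 * Real.pi))⁻¹ * (Real.sqrt (2 * Real.pi))⁻¹
        * (Real.sqrt (2 * Real.pi) / Real.sqrt (1 + b ^ 2)) := by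
        rw [h2, harg, Real.sqrt_div hA]
    _ = (Real.sqrt (2 * Real.pi * (1 + b ^ 2)))⁻¹ := by
        rw [Real.sqrt_mul hA]
        field_simp
lemma meas_sg_cdf (b : ℝ) : Continuous (fun x => stdGaussianPDF x * stdGaussianCDF (b * x)) :=
  sg_cont.mul (Phi_cont.comp (continuous_const.mul continuous_id))

lemma integrable_sg_mul_cdf (b : ℝ) :
    Integrable (fun x => stdGaussianPDF x * stdGaussianCDF (b * x)) := by
  refine sg_integrable.mono' (meas_sg_cdf b).aestronglyMeasurable
    (Eventually.of_forall fun x => ?_)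
  rw [Real.norm_eq_abs, abs_mul, abs_of_nonneg (sg_nonneg x), abs_of_nonneg (Phi_nonneg _)]
  calc stdGaussianPDF x * stdGaussianCDF (b * x) ≤ stdGaussianPDF x * 1 :=
        mul_le_mul_of_nonneg_left (Phi_le_one _) (sg_nonneg x)
    _ = stdGaussianPDF x := mul_one _

lemma integrable_id_mul_sg_mul_cdf (b : ℝ) :
    Integrable (fun x => x * stdGaussianPDF x * stdGaussianCDF (b * x)) := by
  refine integrable_abs_mul_sg.mono'
    ((continuous_id.mul sg_cont).mul (Phi_cont.comp (continuous_const.mul continuous_id))).aestronglyMeasurable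
    (Eventually.of_forall fun x => ?_)
  rw [Real.norm_eq_abs, abs_mul, abs_mul, abs_of_nonneg (sg_nonneg x),
    abs_of_nonneg (Phi_nonneg _)]
  calc |x| * stdGaussianPDF x * stdGaussianCDF (b * x) ≤ |x| * stdGaussianPDF x * 1 :=
        mul_le_mul_of_nonneg_left (Phi_le_one _) (mul_nonneg (abs_nonneg x) (sg_nonneg x))
    _ = |x| * stdGaussianPDF x := mul_one _

lemma integrable_sq_mul_sg_mul_cdf (b : ℝ) :
    Integrable (fun x => x ^ 2 * stdGaussianPDF x * stdGaussianCDF (b * x)) := by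
  refine integrable_sq_mul_sg.mono'
    (((continuous_pow 2).mul sg_cont).mul (Phi_cont.comp (continuous_const.mul continuous_id))).aestronglyMeasurable
    (Eventually.of_forall fun x => ?_)
  rw [Real.norm_eq_abs, abs_mul, abs_mul, abs_of_nonneg (sg_nonneg x),
    abs_of_nonneg (Phi_nonneg _), abs_of_nonneg (sq_nonneg x)]
  calc x ^ 2 * stdGaussianPDF x * stdGaussianCDF (b * x) ≤ x ^ 2 * stdGaussianPDF x * 1 :=
        mul_le_mul_of_nonneg_left (Phi_le_one _) (mul_nonneg (sq_nonneg x) (sg_nonneg x))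
    _ = x ^ 2 * stdGaussianPDF x := mul_one _

lemma integrable_sg_mul_sg (b : ℝ) :
    Integrable (fun x => stdGaussianPDF x * stdGaussianPDF (b * x)) := by
  refine (sg_integrable.const_mul ((Real.sqrt (2 * Real.pi))⁻¹)).mono'
    (sg_cont.mul (sg_cont.comp (continuous_const.mul continuous_id))).aestronglyMeasurable
    (Eventually.of_forall fun x => ?_)
  rw [Real.norm_eq_abs, abs_mul, abs_of_nonneg (sg_nonneg x), abs_of_nonneg (sg_nonneg _)]
  calc stdGaussianPDF x * stdGaussianPDF (b * x)
      ≤ stdGaussianPDF x * (Real.sqrt (2 * Real.pi))⁻¹ :=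
        mul_le_mul_of_nonneg_left (sg_le _) (sg_nonneg x)
    _ = (Real.sqrt (2 * Real.pi))⁻¹ * stdGaussianPDF x := mul_comm _ _

/-- Key integration by parts identity. -/
lemma integral_id_mul_sg_mul_cdf (b : ℝ) :
    ∫ x, x * stdGaussianPDF x * stdGaussianCDF (b * x)
      = b * (Real.sqrt (2 * Real.pi * (1 + b ^ 2)))⁻¹ := by
  have hd : ∀ x : ℝ, HasDerivAt (fun y => -(stdGaussianPDF y * stdGaussianCDF (b * y)))
      (x * stdGaussianPDF x * stdGaussianCDF (b * x)
        - b * (stdGaussianPDF x * stdGaussianPDF (b * x))) x := by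
    intro x
    have hg : HasDerivAt (fun y : ℝ => b * y) b x := by
      simpa using (hasDerivAt_id x).const_mul b
    have h1 : HasDerivAt (fun y : ℝ => stdGaussianCDF (b * y)) (stdGaussianPDF (b * x) * b) x :=
      (hasDerivAt_Phi (b * x)).comp x hg
    have h2 := ((hasDerivAt_sg x).mul h1).neg
    rw [show -(-x * stdGaussianPDF x * stdGaussianCDF (b * x)
        + stdGaussianPDF x * (stdGaussianPDF (b * x) * b))
        = x * stdGaussianPDF x * stdGaussianCDF (b * x)
          - b * (stdGaussianPDF x * stdGaussianPDF (b * x)) by ring] at h2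
    exact h2
  have hint : Integrable (fun x => x * stdGaussianPDF x * stdGaussianCDF (b * x)
      - b * (stdGaussianPDF x * stdGaussianPDF (b * x))) :=
    (integrable_id_mul_sg_mul_cdf b).sub ((integrable_sg_mul_sg b).const_mul b)
  have hsq : ∀ x : ℝ, ‖-(stdGaussianPDF x * stdGaussianCDF (b * x))‖ ≤ stdGaussianPDF x := by
    intro x
    rw [norm_neg, Real.norm_eq_abs, abs_mul, abs_of_nonneg (sg_nonneg x),
      abs_of_nonneg (Phi_nonneg _)]
    calc stdGaussianPDF x * stdGaussianCDF (b * x) ≤ stdGaussianPDF x * 1 :=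
          mul_le_mul_of_nonneg_left (Phi_le_one _) (sg_nonneg x)
      _ = stdGaussianPDF x := mul_one _
  have hz := integral_deriv_eq_zero hd hint
    (squeeze_zero_norm hsq tendsto_sg_atBot)
    (squeeze_zero_norm hsq tendsto_sg_atTop)
  rw [integral_sub (integrable_id_mul_sg_mul_cdf b) ((integrable_sg_mul_sg b).const_mul b),
    integral_const_mul, integral_sg_mul_sg] at hz
  linarith

/-- Normalization. -/
lemma integral_sg_mul_cdf (b : ℝ) :
    ∫ x, stdGaussianPDF x * stdGaussianCDF (b * x) = 1 / 2 := by
  have h := integral_neg_eq_self (fun x => stdGaussianPDF x * stdGaussianCDF (b * x))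
    (volume : Measure ℝ)
  have key : ∀ x : ℝ, stdGaussianPDF (-x) * stdGaussianCDF (b * -x)
      = stdGaussianPDF x - stdGaussianPDF x * stdGaussianCDF (b * x) := by
    intro x
    rw [sg_neg, show b * -x = -(b * x) by ring, Phi_neg]
    ring
  simp only [key] at h
  rw [integral_sub sg_integrable (integrable_sg_mul_cdf b), sg_integral] at h
  linarith

/-- Second moment. -/
lemma integral_sq_mul_sg_mul_cdf (b : ℝ) :
    ∫ x, x ^ 2 * stdGaussianPDF x * stdGaussianCDF (b * x) = 1 / 2 := by
  have h := integral_neg_eq_self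
    (fun x => x ^ 2 * stdGaussianPDF x * stdGaussianCDF (b * x)) (volume : Measure ℝ)
  have key : ∀ x : ℝ, (-x) ^ 2 * stdGaussianPDF (-x) * stdGaussianCDF (b * -x)
      = x ^ 2 * stdGaussianPDF x - x ^ 2 * stdGaussianPDF x * stdGaussianCDF (b * x) := by
    intro x
    rw [sg_neg, show b * -x = -(b * x) by ring, Phi_neg, neg_sq]
    ring
  simp only [key] at h
  rw [integral_sub integrable_sq_mul_sg (integrable_sq_mul_sg_mul_cdf b),
    integral_sq_mul_sg] at h
  linarith
lemma cov {σ : ℝ} (hσ : 0 < σ) (μ : ℝ) (G : ℝ → ℝ) :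
    ∫ x, G ((x - μ) / σ) = σ * ∫ t, G t := by
  have h1 : ∫ x, G ((x - μ) / σ) = ∫ x, (fun y => G (y / σ)) (x - μ) := rfl
  rw [h1, integral_sub_right_eq_self (fun y => G (y / σ)) μ,
    MeasureTheory.Measure.integral_comp_div G σ, abs_of_pos hσ, smul_eq_mul]


/-- `r(x) = 2 φ_{μ,σ²}(x) Φ((μ-x)/√(σ²+ρ²))` is a probability density with mean
`μ - 2σ²/√(2π(2σ²+ρ²))` and variance `σ² [1 - 2σ²/(π(2σ²+ρ²))]`. -/
theorem loser_density_props (μ σ ρ : ℝ) (hσ : 0 < σ) (hρ : 0 < ρ) :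
    (∀ x, 0 ≤ 2 * normalPDF μ σ x
        * stdGaussianCDF ((μ - x) / Real.sqrt (σ ^ 2 + ρ ^ 2))) ∧
      (∫ x, 2 * normalPDF μ σ x
        * stdGaussianCDF ((μ - x) / Real.sqrt (σ ^ 2 + ρ ^ 2))) = 1 ∧
      (∫ x, x * (2 * normalPDF μ σ x
          * stdGaussianCDF ((μ - x) / Real.sqrt (σ ^ 2 + ρ ^ 2))))
        = μ - 2 * σ ^ 2 / Real.sqrt (2 * Real.pi * (2 * σ ^ 2 + ρ ^ 2)) ∧
      (∫ x, x ^ 2 * (2 * normalPDF μ σ x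
          * stdGaussianCDF ((μ - x) / Real.sqrt (σ ^ 2 + ρ ^ 2))))
        - (∫ x, x * (2 * normalPDF μ σ x
          * stdGaussianCDF ((μ - x) / Real.sqrt (σ ^ 2 + ρ ^ 2)))) ^ 2
        = σ ^ 2 * (1 - 2 * σ ^ 2 / (Real.pi * (2 * σ ^ 2 + ρ ^ 2))) := by
  have hs : 0 < Real.sqrt (σ ^ 2 + ρ ^ 2) := by positivity
  set s : ℝ := Real.sqrt (σ ^ 2 + ρ ^ 2) with hsdef
  have hs2 : s ^ 2 = σ ^ 2 + ρ ^ 2 := Real.sq_sqrt (by positivity)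
  set c : ℝ := -(σ / s) with hcdef
  set A : ℝ := Real.sqrt (2 * Real.pi * (2 * σ ^ 2 + ρ ^ 2)) with hAdef
  have hA : 0 < A := by rw [hAdef]; positivity
  have hA2 : A ^ 2 = 2 * Real.pi * (2 * σ ^ 2 + ρ ^ 2) := Real.sq_sqrt (by positivity)
  -- arithmetic about c
  have hc2 : c ^ 2 = σ ^ 2 / s ^ 2 := by rw [hcdef]; ring
  have h1c : 1 + c ^ 2 = (2 * σ ^ 2 + ρ ^ 2) / s ^ 2 := by
    rw [hc2]
    field_simp
    rw [hs2]; ring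
  have h2c : Real.sqrt (2 * Real.pi * (1 + c ^ 2)) = A / s := by
    rw [h1c, show 2 * Real.pi * ((2 * σ ^ 2 + ρ ^ 2) / s ^ 2)
        = 2 * Real.pi * (2 * σ ^ 2 + ρ ^ 2) / s ^ 2 by ring,
      Real.sqrt_div (by positivity), Real.sqrt_sq hs.le, ← hAdef]
  have hM : c * (Real.sqrt (2 * Real.pi * (1 + c ^ 2)))⁻¹ = -(σ / A) := by
    rw [h2c, hcdef]
    field_simp
  -- standardized integrals
  have I0 := integral_sg_mul_cdf c
  have I1 : ∫ t, t * stdGaussianPDF t * stdGaussianCDF (c * t) = -(σ / A) :=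
    (integral_id_mul_sg_mul_cdf c).trans hM
  have I2 := integral_sq_mul_sg_mul_cdf c
  -- pointwise descriptions
  have hpdf : ∀ x : ℝ, normalPDF μ σ x = σ⁻¹ * stdGaussianPDF ((x - μ) / σ) := by
    intro x
    have hexp : -((x - μ) / σ) ^ 2 / 2 = -(x - μ) ^ 2 / (2 * σ ^ 2) := by
      rw [div_pow]; ring
    simp only [normalPDF, stdGaussianPDF, hexp, mul_inv]
    ring
  have harg : ∀ x : ℝ, (μ - x) / s = c * ((x - μ) / σ) := by
    intro x
    rw [hcdef]
    field_simp
    ring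
  -- normalization
  set G0 : ℝ → ℝ := fun t => 2 * (σ⁻¹ * stdGaussianPDF t) * stdGaussianCDF (c * t) with hG0
  set G1 : ℝ → ℝ := fun t => (μ + σ * t) * (2 * (σ⁻¹ * stdGaussianPDF t)
      * stdGaussianCDF (c * t)) with hG1
  set G2 : ℝ → ℝ := fun t => (μ + σ * t) ^ 2 * (2 * (σ⁻¹ * stdGaussianPDF t)
      * stdGaussianCDF (c * t)) with hG2
  have hnorm : (∫ x, 2 * normalPDF μ σ x * stdGaussianCDF ((μ - x) / s)) = 1 := by
    have key0 : (fun x => 2 * normalPDF μ σ x * stdGaussianCDF ((μ - x) / s))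
        = fun x => G0 ((x - μ) / σ) := by
      funext x
      show _ = 2 * (σ⁻¹ * stdGaussianPDF ((x - μ) / σ))
          * stdGaussianCDF (c * ((x - μ) / σ))
      rw [hpdf x, harg x]
    rw [key0, cov hσ μ G0]
    have hsplit : G0
        = fun t => (2 * σ⁻¹) * (stdGaussianPDF t * stdGaussianCDF (c * t)) := by
      funext t; simp only [hG0]; ring
    rw [hsplit, integral_const_mul, I0]
    field_simp
  -- mean
  have hmean : (∫ x, x * (2 * normalPDF μ σ x * stdGaussianCDF ((μ - x) / s)))
      = μ - 2 * σ ^ 2 / A := by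
    have key1 : (fun x => x * (2 * normalPDF μ σ x * stdGaussianCDF ((μ - x) / s)))
        = fun x => G1 ((x - μ) / σ) := by
      funext x
      show _ = (μ + σ * ((x - μ) / σ)) * (2 * (σ⁻¹ * stdGaussianPDF ((x - μ) / σ))
          * stdGaussianCDF (c * ((x - μ) / σ)))
      have hx : μ + σ * ((x - μ) / σ) = x := by field_simp; ring
      rw [hx, hpdf x, harg x]
    rw [key1, cov hσ μ G1]
    have hsplit : G1
        = fun t => (2 * μ * σ⁻¹) * (stdGaussianPDF t * stdGaussianCDF (c * t))
            + (2 * σ * σ⁻¹) * (t * stdGaussianPDF t * stdGaussianCDF (c * t)) := by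
      funext t; simp only [hG1]; ring
    rw [hsplit, integral_add ((integrable_sg_mul_cdf c).const_mul _)
      ((integrable_id_mul_sg_mul_cdf c).const_mul _),
      integral_const_mul, integral_const_mul, I0, I1]
    field_simp
    ring
  -- second moment
  have hsq : (∫ x, x ^ 2 * (2 * normalPDF μ σ x * stdGaussianCDF ((μ - x) / s)))
      = μ ^ 2 + σ ^ 2 - 4 * μ * σ ^ 2 / A := by
    have key2 : (fun x => x ^ 2 * (2 * normalPDF μ σ x * stdGaussianCDF ((μ - x) / s)))
        = fun x => G2 ((x - μ) / σ) := by
      funext x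
      show _ = (μ + σ * ((x - μ) / σ)) ^ 2 * (2 * (σ⁻¹ * stdGaussianPDF ((x - μ) / σ))
          * stdGaussianCDF (c * ((x - μ) / σ)))
      have hx : μ + σ * ((x - μ) / σ) = x := by field_simp; ring
      rw [hx, hpdf x, harg x]
    rw [key2, cov hσ μ G2]
    have hsplit : G2
        = fun t => (2 * μ ^ 2 * σ⁻¹) * (stdGaussianPDF t * stdGaussianCDF (c * t))
            + ((4 * μ * σ * σ⁻¹) * (t * stdGaussianPDF t * stdGaussianCDF (c * t))
            + (2 * σ ^ 2 * σ⁻¹) * (t ^ 2 * stdGaussianPDF t * stdGaussianCDF (c * t))) := by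
      funext t; simp only [hG2]; ring
    have hint1 : Integrable (fun t : ℝ =>
        (4 * μ * σ * σ⁻¹) * (t * stdGaussianPDF t * stdGaussianCDF (c * t))
          + (2 * σ ^ 2 * σ⁻¹) * (t ^ 2 * stdGaussianPDF t * stdGaussianCDF (c * t))) :=
      ((integrable_id_mul_sg_mul_cdf c).const_mul _).add
        ((integrable_sq_mul_sg_mul_cdf c).const_mul _)
    rw [hsplit, integral_add ((integrable_sg_mul_cdf c).const_mul _) hint1,
      integral_add ((integrable_id_mul_sg_mul_cdf c).const_mul _)
        ((integrable_sq_mul_sg_mul_cdf c).const_mul _),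
      integral_const_mul, integral_const_mul, integral_const_mul, I0, I1, I2]
    field_simp
    ring
  refine ⟨?_, hnorm, hmean, ?_⟩
  · intro x
    have h1 : 0 ≤ normalPDF μ σ x :=
      mul_nonneg (inv_nonneg.2 (by positivity)) (Real.exp_pos _).le
    exact mul_nonneg (by linarith) (Phi_nonneg _)
  · rw [hsq, hmean]
    have hstep : μ ^ 2 + σ ^ 2 - 4 * μ * σ ^ 2 / A - (μ - 2 * σ ^ 2 / A) ^ 2
        = σ ^ 2 - 4 * σ ^ 4 / A ^ 2 := by
      field_simp
      ring
    rw [hstep, hA2]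
    have hπ : (0:ℝ) < Real.pi := Real.pi_pos
    field_simp
    ring
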